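/- arXiv:1205.1751 — 2 statements merged into one kernel-verified Lean document; each statement's English description precedes it below -/
import Mathlib

section
/- Let ϑ_1, …, ϑ_k ∈ {±1} with an odd number of indices i satisfying ϑ_i = −1, and define ℓ_i := ϑ_i e_i − e_{i+1} ∈ ℤ^k (cyclically, e_{k+1} = e_1). Then the ℤ-span of {ℓ_1, …, ℓ_k} equals the sublattice {a = ∑_i α_i e_i ∈ ℤ^k : ∑_i α_i ≡ 0 (mod 2)} of vectors with even coordinate sum. -/
theorem stmt14 (k : ℕ) (hk : 1 ≤ k)
    (ϑ : ℕ → ℤ) (hϑ : ∀ i, 1 ≤ i → i ≤ k → ϑ i = 1 ∨ ϑ i = -1)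
    (hodd : Odd ((Finset.Icc 1 k).filter (fun i => ϑ i = -1)).card)
    (e : ℕ → Fin k → ℤ)
    (he : ∀ i, 1 ≤ i → i ≤ k → e i = fun x : Fin k => if (x : ℕ) = i - 1 then 1 else 0)
    (hecyc : e (k + 1) = e 1)
    (ℓ : ℕ → Fin k → ℤ)
    (hℓ : ∀ i, 1 ≤ i → i ≤ k → ℓ i = ϑ i • e i - e (i + 1)) :
    (Submodule.span ℤ {v : Fin k → ℤ | ∃ i, 1 ≤ i ∧ i ≤ k ∧ v = ℓ i} :
        Set (Fin k → ℤ)) =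
      {a : Fin k → ℤ | (2 : ℤ) ∣ ∑ x : Fin k, a x} := by
  set L : Submodule ℤ (Fin k → ℤ) :=
    Submodule.span ℤ {v : Fin k → ℤ | ∃ i, 1 ≤ i ∧ i ≤ k ∧ v = ℓ i} with hLdef
  -- sum of coordinates of e i is 1
  have hsum_e : ∀ i, 1 ≤ i → i ≤ k → ∑ x : Fin k, e i x = 1 := by
    intro i h1 h2
    have hi : i - 1 < k := by omega
    rw [he i h1 h2]
    have hcond : ∀ x : Fin k,
        (if (x : ℕ) = i - 1 then (1 : ℤ) else 0)
          = if x = (⟨i - 1, hi⟩ : Fin k) then (1 : ℤ) else 0 := by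
      intro x; simp [Fin.ext_iff]
    simp only [hcond]
    simp
  have hsum_e' : ∀ i, 1 ≤ i → i ≤ k → ∑ x : Fin k, e (i + 1) x = 1 := by
    intro i h1 h2
    rcases eq_or_lt_of_le h2 with rfl | hlt
    · rw [hecyc]; exact hsum_e 1 le_rfl hk
    · exact hsum_e (i + 1) (by omega) (by omega)
  -- the even-sum submodule
  have hLS : ∀ v ∈ L, (2 : ℤ) ∣ ∑ x : Fin k, v x := by
    have : L ≤
        ({ carrier := {a : Fin k → ℤ | (2 : ℤ) ∣ ∑ x : Fin k, a x}
           add_mem' := by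
             intro a b ha hb
             simpa [Finset.sum_add_distrib] using dvd_add ha hb
           zero_mem' := by simp
           smul_mem' := by
             intro c a ha
             simpa [Finset.mul_sum] using Dvd.dvd.mul_left ha c } : Submodule ℤ (Fin k → ℤ)) := by
      rw [hLdef]
      apply Submodule.span_le.2
      rintro v ⟨i, h1, h2, rfl⟩
      show (2 : ℤ) ∣ ∑ x : Fin k, ℓ i x
      rw [hℓ i h1 h2]
      have : ∑ x : Fin k, (ϑ i • e i - e (i + 1)) x
          = ϑ i * (∑ x : Fin k, e i x) - ∑ x : Fin k, e (i + 1) x := by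
        simp [Finset.sum_sub_distrib, Finset.mul_sum]
      rw [this, hsum_e i h1 h2, hsum_e' i h1 h2]
      rcases hϑ i h1 h2 with h | h <;> simp [h]
    exact fun v hv => this hv
  -- quotient map
  have hstep : ∀ i, 1 ≤ i → i ≤ k → L.mkQ (e (i + 1)) = ϑ i • L.mkQ (e i) := by
    intro i h1 h2
    have h0 : L.mkQ (ℓ i) = 0 := by
      rw [Submodule.mkQ_apply, Submodule.Quotient.mk_eq_zero]
      exact Submodule.subset_span ⟨i, h1, h2, rfl⟩
    rw [hℓ i h1 h2, map_sub, map_smul, sub_eq_zero] at h0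
    exact h0.symm
  have hprod : ∀ i, i ≤ k →
      L.mkQ (e (i + 1)) = (∏ j ∈ Finset.Icc 1 i, ϑ j) • L.mkQ (e 1) := by
    intro i
    induction i with
    | zero => intro _; simp
    | succ n ih =>
      intro h
      rw [hstep (n + 1) (by omega) h, ih (by omega), smul_smul,
        Finset.prod_Icc_succ_top (by omega : 1 ≤ n + 1), mul_comm]
  have hP : (∏ j ∈ Finset.Icc 1 k, ϑ j) = -1 := by
    have h1 : ∀ j ∈ Finset.Icc 1 k, ϑ j = if ϑ j = -1 then -1 else 1 := by
      intro j hj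
      rw [Finset.mem_Icc] at hj
      rcases hϑ j hj.1 hj.2 with h | h <;> simp [h]
    rw [Finset.prod_congr rfl h1, Finset.prod_ite, Finset.prod_const, Finset.prod_const,
      one_pow, mul_one, hodd.neg_one_pow]
  have hadd : L.mkQ (e 1) + L.mkQ (e 1) = 0 := by
    have h := hprod k le_rfl
    rw [hecyc, hP, neg_one_smul] at h
    exact eq_neg_iff_add_eq_zero.mp h
  have h2q : (2 : ℤ) • L.mkQ (e 1) = 0 := by
    rw [two_smul]; exact hadd
  have hneg : -L.mkQ (e 1) = L.mkQ (e 1) := neg_eq_of_add_eq_zero_left hadd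
  have hsign : ∀ i, i ≤ k → L.mkQ (e (i + 1)) = L.mkQ (e 1) := by
    intro i hi
    have hpm : (∏ j ∈ Finset.Icc 1 i, ϑ j) = 1 ∨ (∏ j ∈ Finset.Icc 1 i, ϑ j) = -1 := by
      apply Finset.prod_induction ϑ (fun z => z = 1 ∨ z = -1)
      · rintro a b (rfl | rfl) (rfl | rfl) <;> simp
      · exact Or.inl rfl
      · intro j hj
        rw [Finset.mem_Icc] at hj
        exact hϑ j hj.1 (le_trans hj.2 hi)
    rw [hprod i hi]
    rcases hpm with h | h <;> rw [h]
    · simp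
    · rw [neg_one_smul]; exact hneg
  -- conclude
  ext a
  simp only [SetLike.mem_coe, Set.mem_setOf_eq]
  constructor
  · exact hLS a
  · intro ha
    obtain ⟨m, hm⟩ := ha
    have hrep : a = ∑ x : Fin k, a x • e ((x : ℕ) + 1) := by
      funext y
      have hterm : ∀ x : Fin k, (a x • e ((x : ℕ) + 1)) y = if y = x then a y else 0 := by
        intro x
        rw [he ((x : ℕ) + 1) (by omega) (by omega)]
        by_cases h : y = x
        · subst h; simp
        · have : (y : ℕ) ≠ (x : ℕ) := fun hc => h (Fin.ext hc)
          simp [h, this]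
      rw [Finset.sum_apply]
      simp only [hterm]
      simp
    have hq0 : L.mkQ a = 0 := by
      rw [hrep, map_sum]
      simp only [map_smul]
      have : ∀ x : Fin k, a x • L.mkQ (e ((x : ℕ) + 1)) = a x • L.mkQ (e 1) := by
        intro x
        rw [hsign (x : ℕ) (by omega)]
      simp only [this]
      rw [← Finset.sum_smul, hm, mul_comm, mul_smul, h2q, smul_zero]
    rw [Submodule.mkQ_apply, Submodule.Quotient.mk_eq_zero] at hq0
    exact hq0
end

section
/- Let m ≥ 1 and let x = (x_1,…,x_m), y = (y_1,…,y_m) ∈ ℚ^m with y ≠ 0. Suppose the identity ∑_{i=1}^m y_i T_i^2 + (∑_{i=1}^m x_i T_i)(∑_{i=1}^m y_i T_i) = 0 holds in ℚ[T_1, …, T_m]. Then exactly one of the following holds: (a) there exist an index i and β ∈ ℚ \ {0} with y = β e_i and x = −e_i; or (b) there exist distinct indices i ≠ j and β ∈ ℚ \ {0} with y = β(e_i − e_j) and x = −(e_i + e_j). In particular, if ∑_i x_i = −2 then case (b) holds. -/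
open MvPolynomial

theorem stmt19 (m : ℕ) (hm : 1 ≤ m) (x y : Fin m → ℚ) (hy : y ≠ 0)
    (h : (∑ i, C (y i) * X i ^ 2) +
        (∑ i, C (x i) * X i) * (∑ i, C (y i) * X i) =
      (0 : MvPolynomial (Fin m) ℚ)) :
    (Xor'
      (∃ (i : Fin m) (β : ℚ), β ≠ 0 ∧ y = β • (Pi.single i 1 : Fin m → ℚ) ∧
        x = -(Pi.single i 1 : Fin m → ℚ))
      (∃ (i j : Fin m) (β : ℚ), i ≠ j ∧ β ≠ 0 ∧
        y = β • ((Pi.single i 1 : Fin m → ℚ) - Pi.single j 1) ∧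
        x = -((Pi.single i 1 : Fin m → ℚ) + Pi.single j 1))) ∧
    (∑ i, x i = -2 →
      ∃ (i j : Fin m) (β : ℚ), i ≠ j ∧ β ≠ 0 ∧
        y = β • ((Pi.single i 1 : Fin m → ℚ) - Pi.single j 1) ∧
        x = -((Pi.single i 1 : Fin m → ℚ) + Pi.single j 1)) := by
  have E : ∀ t : Fin m → ℚ,
      (∑ i, y i * t i ^ 2) + (∑ i, x i * t i) * (∑ i, y i * t i) = 0 := by
    intro t
    have := congrArg (eval t) h
    simpa using this
  have S1 : ∀ (f : Fin m → ℚ) (k : Fin m),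
      (∑ l, f l * (Pi.single k 1 : Fin m → ℚ) l) = f k := by
    intro f k
    simp [Pi.single_apply, mul_ite, Finset.sum_ite_eq']
  have A : ∀ k, y k + x k * y k = 0 := by
    intro k
    have ht : ∀ l, ((Pi.single k 1 : Fin m → ℚ) l) ^ 2
        = (Pi.single k 1 : Fin m → ℚ) l := by
      intro l
      rcases eq_or_ne l k with rfl | hl
      · simp
      · simp [Pi.single_eq_of_ne hl]
    have hE := E (Pi.single k 1)
    rw [Finset.sum_congr rfl (fun i _ => by rw [ht i]), S1, S1] at hE
    exact hE
  have B : ∀ i j, i ≠ j → x i * y j + x j * y i = 0 := by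
    intro i j hij
    set t : Fin m → ℚ :=
      fun l => (Pi.single i 1 : Fin m → ℚ) l + (Pi.single j 1 : Fin m → ℚ) l with htdef
    have hsq : ∀ l, t l ^ 2 = t l := by
      intro l
      rcases eq_or_ne l i with rfl | hi
      · simp [t, Pi.single_eq_of_ne hij]
      · rcases eq_or_ne l j with rfl | hj
        · simp [t, Pi.single_eq_of_ne hi]
        · simp [t, Pi.single_eq_of_ne hi, Pi.single_eq_of_ne hj]
    have Ssum : ∀ f : Fin m → ℚ, (∑ l, f l * t l) = f i + f j := by
      intro f
      simp only [htdef, mul_add, Finset.sum_add_distrib, S1]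
    have hE := E t
    rw [Finset.sum_congr rfl (fun l _ => by rw [hsq l]), Ssum, Ssum] at hE
    linear_combination hE - A i - A j
  obtain ⟨k0, hk0⟩ : ∃ k, y k ≠ 0 := by
    by_contra hc
    push_neg at hc
    exact hy (funext hc)
  have hx1 : ∀ k, y k ≠ 0 → x k = -1 := by
    intro k hk
    have hA := A k
    have h2 : y k * (1 + x k) = 0 := by linear_combination hA
    rcases mul_eq_zero.mp h2 with h1 | h1
    · exact absurd h1 hk
    · linarith
  have hx0 : ∀ k, k ≠ k0 → y k = 0 → x k = 0 := by
    intro k hk hyk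
    have hB := B k0 k (Ne.symm hk)
    rw [hyk] at hB
    have h2 : x k * y k0 = 0 := by linarith
    rcases mul_eq_zero.mp h2 with h1 | h1
    · exact h1
    · exact absurd h1 hk0
  have hxor : Xor'
      (∃ (i : Fin m) (β : ℚ), β ≠ 0 ∧ y = β • (Pi.single i 1 : Fin m → ℚ) ∧
        x = -(Pi.single i 1 : Fin m → ℚ))
      (∃ (i j : Fin m) (β : ℚ), i ≠ j ∧ β ≠ 0 ∧
        y = β • ((Pi.single i 1 : Fin m → ℚ) - Pi.single j 1) ∧
        x = -((Pi.single i 1 : Fin m → ℚ) + Pi.single j 1)) := by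
    by_cases hone : ∀ k, k ≠ k0 → y k = 0
    · -- case (a)
      left
      have hxk0 : x k0 = -1 := hx1 k0 hk0
      constructor
      · refine ⟨k0, y k0, hk0, ?_, ?_⟩
        · funext l
          rcases eq_or_ne l k0 with rfl | hl
          · simp
          · simp [hone l hl, Pi.single_eq_of_ne hl]
        · funext l
          rcases eq_or_ne l k0 with rfl | hl
          · simp [hxk0]
          · simp [hx0 l hl (hone l hl), Pi.single_eq_of_ne hl]
      · rintro ⟨i, j, β, hij, hβ, hyb, -⟩
        have hyi : y i = β := by
          rw [hyb]
          simp [Pi.single_eq_of_ne hij]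
        have hyj : y j = -β := by
          rw [hyb]
          simp [Pi.single_eq_of_ne (Ne.symm hij)]
        have hi : i = k0 := by
          by_contra hc
          exact hβ (hyi ▸ hone i hc)
        have hj : j = k0 := by
          by_contra hc
          have := hone j hc
          rw [hyj] at this
          exact hβ (by linarith)
        exact hij (hi.trans hj.symm)
    · -- case (b)
      right
      push_neg at hone
      obtain ⟨l0, hl0ne, hl0⟩ := hone
      have hxk0 : x k0 = -1 := hx1 k0 hk0
      have hxl0 : x l0 = -1 := hx1 l0 hl0
      have hyl0 : y l0 = -y k0 := by
        have hB := B k0 l0 (Ne.symm hl0ne)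
        rw [hxk0, hxl0] at hB
        linarith
      have hzero : ∀ k, k ≠ k0 → k ≠ l0 → y k = 0 := by
        intro k hk1 hk2
        by_contra hc
        have hxk : x k = -1 := hx1 k hc
        have hB1 := B k0 k (Ne.symm hk1)
        have hB2 := B l0 k (Ne.symm hk2)
        rw [hxk0, hxk] at hB1
        rw [hxl0, hxk] at hB2
        have e1 : y k = -y k0 := by linarith
        have e2 : y k = -y l0 := by linarith
        rw [hyl0] at e2
        have : y k0 = 0 := by linarith
        exact hk0 this
      constructor
      · refine ⟨k0, l0, y k0, Ne.symm hl0ne, hk0, ?_, ?_⟩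
        · funext l
          rcases eq_or_ne l k0 with rfl | hlk
          · simp [Pi.single_eq_of_ne (Ne.symm hl0ne)]
          · rcases eq_or_ne l l0 with rfl | hll
            · simp [hyl0, Pi.single_eq_of_ne hlk]
            · simp [hzero l hlk hll, Pi.single_eq_of_ne hlk, Pi.single_eq_of_ne hll]
        · funext l
          rcases eq_or_ne l k0 with rfl | hlk
          · simp [hxk0, Pi.single_eq_of_ne (Ne.symm hl0ne)]
          · rcases eq_or_ne l l0 with rfl | hll
            · simp [hxl0, Pi.single_eq_of_ne hlk]
            · simp [hx0 l hlk (hzero l hlk hll), Pi.single_eq_of_ne hlk,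
                Pi.single_eq_of_ne hll]
      · rintro ⟨i, β, hβ, hya, -⟩
        have hk0i : k0 = i := by
          by_contra hc
          have : y k0 = 0 := by rw [hya]; simp [Pi.single_eq_of_ne hc]
          exact hk0 this
        have hl0i : l0 = i := by
          by_contra hc
          have : y l0 = 0 := by rw [hya]; simp [Pi.single_eq_of_ne hc]
          exact hl0 this
        exact hl0ne (hl0i.trans hk0i.symm)
  refine ⟨hxor, ?_⟩
  intro hs
  rcases hxor with ⟨⟨i, β, hβ, hya, hxa⟩, -⟩ | ⟨hb, -⟩
  · exfalso
    rw [hxa] at hs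
    have : (∑ l, (-(Pi.single i 1 : Fin m → ℚ)) l) = -1 := by
      simp [Finset.sum_pi_single']
    rw [this] at hs
    norm_num at hs
  · exact hb
end
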